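/- Fix heights i₁ ≤ i₂ and j, and let T_{i,j} denote the succinct tree whose leaves are j-tuples of binary strings with at most i bits. Let ν₁ : V → L(T_{i₁,j}) ∪ {⊤} and ν₂ : V → L(T_{i₂,j}) ∪ {⊤} be node labelings with ν₁(u) = ν₂(u)^{i₂−i₁} for all u (where ξ^κ deletes κ leading zeroes from the first component of ξ, and equals ⊤ if the first component has fewer than κ leading zeroes, with ⊤^κ = ⊤). Then for any arc vw with π(v) < 2j, drop(ν₁, vw) = drop(ν₂, vw)^{i₂−i₁}. -/

import Mathlib

/-- Binary strings. -/
abbrev BStr := List Bool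

/-- Tuples of binary strings (labels are `j`-tuples). -/
abbrev Tup := List BStr

/-- The order on binary strings: `0s < ε < 1s'` and `bs < bs' ↔ s < s'`. -/
def slt : BStr → BStr → Prop
  | [], [] => False
  | false :: _, [] => True
  | true :: _, [] => False
  | [], true :: _ => True
  | [], false :: _ => False
  | false :: _, true :: _ => True
  | true :: _, false :: _ => False
  | false :: s, false :: t => slt s t
  | true :: s, true :: t => slt s t

/-- Lexicographic order on tuples of binary strings. -/
def tlt (x y : Tup) : Prop := List.Lex slt x y

/-- Strict order on `L(T) ∪ {⊤}`, with `⊤` (encoded as `none`) on top. -/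
def wlt : Option Tup → Option Tup → Prop
  | some x, some y => tlt x y
  | some _, none => True
  | none, _ => False

/-- Non-strict order on `L(T) ∪ {⊤}`. -/
def wle (x y : Option Tup) : Prop := x = y ∨ wlt x y

/-- `p`-truncation of a label from a tree of height `j`: keep the first `j - p/2`
components; `⊤|_p = ⊤`. -/
def trunc (j p : ℕ) (x : Option Tup) : Option Tup := x.map (List.take (j - p / 2))

/-- Non-violation of an arc with tail priority `p`, tail label `x` and head label `y`
(height-`j` trees): even `p`: `x|_p ≥ y|_p`; odd `p`: `x|_p > y|_p` or both `⊤`. -/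
def NV (j p : ℕ) (x y : Option Tup) : Prop :=
  if Even p then wle (trunc j p y) (trunc j p x)
  else wlt (trunc j p y) (trunc j p x) ∨ (x = none ∧ y = none)

/-- The tail value `x` makes the arc (with head label `y`) *not loose* within the value
domain `D`: either the arc is violated, or `x` is the least value of `D` making the arc
non-violated. -/
def NotLoose (D : Set (Option Tup)) (j p : ℕ) (x y : Option Tup) : Prop :=
  ¬ NV j p x y ∨ ∀ x' ∈ D, wlt x' x → ¬ NV j p x' y

/-- Leaves of the succinct tree `T_{i,j}`: `j`-tuples of binary strings with at most `i`
bits in total. -/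
def LeafSet (i j : ℕ) : Set Tup := {ξ | ξ.length = j ∧ (ξ.map List.length).sum ≤ i}

/-- The value domain `L(T_{i,j}) ∪ {⊤}`. -/
def Dom (i j : ℕ) : Set (Option Tup) := insert none (some '' LeafSet i j)

/-- `ζ(ξ)`: the number of leading zeroes of the first component of `ξ`. -/
def zcount (ξ : Tup) : ℕ := (ξ.headI.takeWhile (fun b => b = false)).length

/-- `ξ^κ`: delete `κ` leading zeroes from the first component of `ξ`; if the first
component has fewer than `κ` leading zeroes the result is `⊤`; and `⊤^κ = ⊤`. -/
def strip (κ : ℕ) : Option Tup → Option Tup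
  | none => none
  | some ξ => if κ ≤ zcount ξ then some (ξ.modifyHead (List.drop κ)) else none

/-- `dval = drop(ν, vw)` over the domain `D i j`: the greatest element `x ≤ ν v` of the
domain such that the arc `vw` is not loose after setting the label of `v` to `x`. -/
def IsDrop (i j p : ℕ) (νv νw dval : Option Tup) : Prop :=
  dval ∈ Dom i j ∧ wle dval νv ∧ NotLoose (Dom i j) j p dval νw ∧
    ∀ x ∈ Dom i j, wle x νv → NotLoose (Dom i j) j p x νw → wle x dval

/-! ### Auxiliary: the string order `slt` is a strict total order -/

private def emb16 (s : BStr) : List ℕ := s.map (fun b => cond b 2 0) ++ [1]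

@[simp] private lemma emb16_nil : emb16 [] = [1] := rfl
@[simp] private lemma emb16_cons (b : Bool) (s : BStr) :
    emb16 (b :: s) = (cond b 2 0) :: emb16 s := rfl

private abbrev nlex16 : List ℕ → List ℕ → Prop := List.Lex (· < ·)

private lemma nlex16_trichot (x y : List ℕ) : nlex16 x y ∨ x = y ∨ nlex16 y x := trichotomous x y
private lemma nlex16_trans {x y z : List ℕ} : nlex16 x y → nlex16 y z → nlex16 x z :=
  fun h1 h2 => List.lex_trans (fun h h' => Nat.lt_trans h h') h1 h2
private lemma nlex16_asymm {x y : List ℕ} : nlex16 x y → ¬ nlex16 y x := fun h h' => asymm h h'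
private lemma nlex16_irrefl (x : List ℕ) : ¬ nlex16 x x := irrefl x

private lemma emb16_injective : Function.Injective emb16 := by
  intro x y hxy
  have h1 : x.map (fun b => cond b 2 0) = y.map (fun b => cond b 2 0) :=
    List.append_cancel_right hxy
  exact List.map_injective_iff.2 (by intro a b hab; cases a <;> cases b <;> simp_all) h1

private lemma slt_iff_emb16 : ∀ s t : BStr, slt s t ↔ nlex16 (emb16 s) (emb16 t)
  | [], [] => by
    simp only [slt, emb16_nil, nlex16, false_iff]
    intro h; cases h with
    | rel h => omega
    | cons h => cases h
  | false :: s, [] => by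
    simp only [slt, emb16_cons, emb16_nil, nlex16, true_iff, cond]
    exact List.Lex.rel (by norm_num)
  | true :: s, [] => by
    simp only [slt, emb16_cons, emb16_nil, nlex16, false_iff, cond]
    intro h; cases h with
    | rel h => omega
  | [], true :: t => by
    simp only [slt, emb16_cons, emb16_nil, nlex16, true_iff, cond]
    exact List.Lex.rel (by norm_num)
  | [], false :: t => by
    simp only [slt, emb16_cons, emb16_nil, nlex16, false_iff, cond]
    intro h; cases h with
    | rel h => omega
  | false :: s, true :: t => by
    simp only [slt, emb16_cons, nlex16, true_iff, cond]
    exact List.Lex.rel (by norm_num)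
  | true :: s, false :: t => by
    simp only [slt, emb16_cons, nlex16, false_iff, cond]
    intro h; cases h with
    | rel h => omega
  | false :: s, false :: t => by
    have := slt_iff_emb16 s t
    simp only [slt, emb16_cons, nlex16, cond] at *
    rw [this, List.lex_cons_iff]
  | true :: s, true :: t => by
    have := slt_iff_emb16 s t
    simp only [slt, emb16_cons, nlex16, cond] at *
    rw [this, List.lex_cons_iff]

instance : IsTrans BStr slt where
  trans a b c h1 h2 :=
    (slt_iff_emb16 a c).2 (nlex16_trans ((slt_iff_emb16 a b).1 h1) ((slt_iff_emb16 b c).1 h2))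

instance : IsIrrefl BStr slt where
  irrefl a h := nlex16_irrefl (emb16 a) ((slt_iff_emb16 a a).1 h)

instance : IsAsymm BStr slt where
  asymm a b h1 h2 := nlex16_asymm ((slt_iff_emb16 a b).1 h1) ((slt_iff_emb16 b a).1 h2)

instance : IsTrichotomous BStr slt where
  trichotomous a b := by
    intro hab hba
    rcases nlex16_trichot (emb16 a) (emb16 b) with h | h | h
    · exact absurd ((slt_iff_emb16 a b).2 h) hab
    · exact emb16_injective h
    · exact absurd ((slt_iff_emb16 b a).2 h) hba

instance : IsStrictTotalOrder BStr slt := {}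

/-! ### Leading zeroes of strings -/

private def lzc (s : BStr) : ℕ := (s.takeWhile (fun b => b = false)).length

@[simp] private lemma lzc_nil : lzc [] = 0 := rfl
@[simp] private lemma lzc_cons_false (s : BStr) : lzc (false :: s) = lzc s + 1 := by
  simp [lzc, List.takeWhile_cons]
@[simp] private lemma lzc_cons_true (s : BStr) : lzc (true :: s) = 0 := by
  simp [lzc, List.takeWhile_cons]

private lemma lzc_le_length (s : BStr) : lzc s ≤ s.length :=
  (List.takeWhile_sublist _).length_le

private lemma take_of_le_lzc : ∀ (κ : ℕ) (s : BStr), κ ≤ lzc s → s.take κ = List.replicate κ false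
  | 0, s, _ => by simp
  | κ + 1, [], h => by simp at h
  | κ + 1, true :: s, h => by simp at h
  | κ + 1, false :: s, h => by
    simp only [lzc_cons_false, add_le_add_iff_right] at h
    simp [List.replicate_succ, take_of_le_lzc κ s h]

private lemma lzc_replicate_append (κ : ℕ) (s : BStr) :
    lzc (List.replicate κ false ++ s) = κ + lzc s := by
  induction κ with
  | zero => simp
  | succ n ih => simp [List.replicate_succ, ih]; omega

private lemma drop_replicate_append (κ : ℕ) (s : BStr) :
    (List.replicate κ false ++ s).drop κ = s := by
  have := List.drop_left (l₁ := List.replicate κ false) (l₂ := s)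
  simpa using this

private lemma replicate_append_drop {κ : ℕ} {s : BStr} (h : κ ≤ lzc s) :
    List.replicate κ false ++ s.drop κ = s := by
  rw [← take_of_le_lzc κ s h, List.take_append_drop]

private lemma slt_of_lzc_lt : ∀ {s t : BStr}, lzc t < lzc s → slt s t
  | [], t, h => by simp at h
  | true :: s, t, h => by simp at h
  | false :: s, [], _ => by simp [slt]
  | false :: s, true :: t, _ => by simp [slt]
  | false :: s, false :: t, h => by
    simp only [lzc_cons_false, add_lt_add_iff_right] at h
    simpa [slt] using slt_of_lzc_lt h

private lemma lzc_le_of_slt {s t : BStr} (h : slt s t) : lzc t ≤ lzc s := by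
  by_contra hc
  exact asymm_of slt h (slt_of_lzc_lt (by omega))

private lemma slt_replicate_append_iff (κ : ℕ) (s t : BStr) :
    slt (List.replicate κ false ++ s) (List.replicate κ false ++ t) ↔ slt s t := by
  induction κ with
  | zero => simp
  | succ n ih => simpa [List.replicate_succ, slt] using ih

/-! ### Tuple order -/

private lemma tlt_trans {x y z : Tup} : tlt x y → tlt y z → tlt x z :=
  fun h1 h2 => List.lex_trans (fun h h' => IsTrans.trans _ _ _ h h') h1 h2
private lemma tlt_asymm {x y : Tup} : tlt x y → ¬ tlt y x :=
  fun h1 h2 => asymm_of (List.Lex slt) h1 h2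
private lemma tlt_irrefl (x : Tup) : ¬ tlt x x := irrefl_of (List.Lex slt) x
private lemma tlt_trichot (x y : Tup) : tlt x y ∨ x = y ∨ tlt y x :=
  trichotomous_of (List.Lex slt) x y

private lemma tlt_cons_iff {a b : BStr} {s t : Tup} :
    tlt (a :: s) (b :: t) ↔ slt a b ∨ (a = b ∧ tlt s t) := by
  constructor
  · intro h
    cases h with
    | cons h => exact Or.inr ⟨rfl, h⟩
    | rel h => exact Or.inl h
  · rintro (h | ⟨rfl, h⟩)
    · exact List.Lex.rel h
    · exact List.Lex.cons h

private lemma tlt_take (n : ℕ) {x y : Tup} (h : tlt x y) :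
    x.take n = y.take n ∨ tlt (x.take n) (y.take n) := by
  induction h generalizing n with
  | nil =>
    cases n with
    | zero => exact Or.inl rfl
    | succ n => exact Or.inr List.Lex.nil
  | @cons a l₁ l₂ h ih =>
    cases n with
    | zero => exact Or.inl rfl
    | succ n =>
      rcases ih n with h' | h'
      · exact Or.inl (by simp [h'])
      · exact Or.inr (List.Lex.cons h')
  | rel h =>
    cases n with
    | zero => exact Or.inl rfl
    | succ n => exact Or.inr (List.Lex.rel h)

private lemma zcount_eq_lzc (ξ : Tup) : zcount ξ = lzc ξ.headI := rfl

private lemma zcount_le_of_tlt {ξ η : Tup} (hξ : ξ ≠ []) (h : tlt ξ η) :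
    zcount η ≤ zcount ξ := by
  cases ξ with
  | nil => exact absurd rfl hξ
  | cons a s =>
    cases h with
    | cons h => exact le_refl _
    | rel h => exact lzc_le_of_slt h

private lemma tlt_of_zcount_lt {ξ η : Tup} (hη : η ≠ []) (h : zcount η < zcount ξ) :
    tlt ξ η := by
  cases ξ with
  | nil =>
    have h0 : zcount ([] : Tup) = 0 := rfl
    omega
  | cons a s =>
    cases η with
    | nil => exact absurd rfl hη
    | cons b t => exact List.Lex.rel (slt_of_lzc_lt h)

/-! ### Order with top -/

@[simp] private lemma wlt_none_left (x : Option Tup) : ¬ wlt none x := by cases x <;> exact id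
@[simp] private lemma wlt_some_none (ξ : Tup) : wlt (some ξ) none := trivial
@[simp] private lemma wlt_some_some {ξ η : Tup} : wlt (some ξ) (some η) ↔ tlt ξ η := Iff.rfl

private lemma wlt_trans {x y z : Option Tup} : wlt x y → wlt y z → wlt x z := by
  cases x <;> cases y <;> cases z <;> simp [wlt] <;> exact tlt_trans

private lemma wlt_irrefl (x : Option Tup) : ¬ wlt x x := by
  cases x <;> simp [wlt] <;> exact tlt_irrefl _

private lemma wlt_asymm {x y : Option Tup} : wlt x y → ¬ wlt y x := by
  cases x <;> cases y <;> simp [wlt] <;> exact tlt_asymm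

private lemma wlt_trichot (x y : Option Tup) : wlt x y ∨ x = y ∨ wlt y x := by
  cases x <;> cases y <;> simp [wlt]
  exact tlt_trichot _ _

private lemma wle_refl (x : Option Tup) : wle x x := Or.inl rfl
private lemma wle_none_right (x : Option Tup) : wle x none := by
  cases x
  · exact Or.inl rfl
  · exact Or.inr trivial

private lemma wle_none_left {x : Option Tup} (h : wle none x) : x = none := by
  rcases h with h | h
  · exact h.symm
  · exact absurd h (wlt_none_left x)

private lemma wle_trans {x y z : Option Tup} : wle x y → wle y z → wle x z := by
  rintro (rfl | h1) (rfl | h2)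
  · exact Or.inl rfl
  · exact Or.inr h2
  · exact Or.inr h1
  · exact Or.inr (wlt_trans h1 h2)

private lemma wle_wlt_trans {x y z : Option Tup} : wle x y → wlt y z → wlt x z := by
  rintro (rfl | h1) h2
  · exact h2
  · exact wlt_trans h1 h2

private lemma wlt_wle_trans {x y z : Option Tup} : wlt x y → wle y z → wlt x z := by
  rintro h1 (rfl | h2)
  · exact h1
  · exact wlt_trans h1 h2

private lemma wle_antisymm {x y : Option Tup} (h1 : wle x y) (h2 : wle y x) : x = y := by
  rcases h1 with rfl | h1
  · rfl
  · rcases h2 with rfl | h2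
    · rfl
    · exact absurd h2 (wlt_asymm h1)

private lemma wle_of_wlt {x y : Option Tup} (h : wlt x y) : wle x y := Or.inr h

/-! ### strip and unstrip -/

private def unstrip (κ : ℕ) : Option Tup → Option Tup :=
  Option.map (List.modifyHead (fun s => List.replicate κ false ++ s))

@[simp] private lemma unstrip_none (κ : ℕ) : unstrip κ none = none := rfl
@[simp] private lemma unstrip_some (κ : ℕ) (ξ : Tup) :
    unstrip κ (some ξ) = some (ξ.modifyHead (fun s => List.replicate κ false ++ s)) := rfl

private lemma zcount_cons (h : BStr) (t : Tup) : zcount (h :: t) = lzc h := rfl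

/-- `x` is `⊤` or a nonempty tuple. -/
private def OKT (x : Option Tup) : Prop := ∀ ξ, x = some ξ → ξ ≠ []

private lemma OKT_none : OKT none := by intro ξ h; cases h

private lemma zcount_muh {κ : ℕ} {ξ : Tup} (hξ : ξ ≠ []) :
    zcount (ξ.modifyHead (fun s => List.replicate κ false ++ s)) = κ + zcount ξ := by
  cases ξ with
  | nil => exact absurd rfl hξ
  | cons h t => simp [zcount_cons, lzc_replicate_append]

private lemma strip_unstrip {κ : ℕ} {x : Option Tup} (hx : OKT x) :
    strip κ (unstrip κ x) = x := by
  cases x with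
  | none => rfl
  | some ξ =>
    cases ξ with
    | nil => exact absurd rfl (hx [] rfl)
    | cons h t =>
      simp only [unstrip_some, List.modifyHead_cons, strip]
      rw [if_pos]
      · simp [drop_replicate_append]
      · rw [zcount_cons, lzc_replicate_append]; omega

private lemma unstrip_strip {κ : ℕ} {ξ η : Tup} (h : strip κ (some ξ) = some η) :
    unstrip κ (some η) = some ξ ∧ κ ≤ zcount ξ := by
  by_cases hκ : κ ≤ zcount ξ
  · refine ⟨?_, hκ⟩
    simp only [strip, if_pos hκ, Option.some.injEq] at h
    subst h
    cases ξ with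
    | nil =>
      have h0 : zcount ([] : Tup) = 0 := rfl
      have : κ = 0 := by omega
      simp [this]
    | cons a s =>
      simp only [List.modifyHead_cons, unstrip_some, Option.some.injEq]
      congr 1
      exact replicate_append_drop hκ
  · simp only [strip, if_neg hκ] at h
    cases h

private lemma tlt_muh_iff {κ : ℕ} {ξ η : Tup} (hξ : ξ ≠ []) (hη : η ≠ []) :
    tlt (ξ.modifyHead (fun s => List.replicate κ false ++ s))
      (η.modifyHead (fun s => List.replicate κ false ++ s)) ↔ tlt ξ η := by
  cases ξ with
  | nil => exact absurd rfl hξ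
  | cons a s =>
    cases η with
    | nil => exact absurd rfl hη
    | cons b t =>
      simp only [List.modifyHead_cons]
      rw [tlt_cons_iff, tlt_cons_iff, slt_replicate_append_iff]
      constructor
      · rintro (h | ⟨he, h⟩)
        · exact Or.inl h
        · exact Or.inr ⟨List.append_cancel_left he, h⟩
      · rintro (h | ⟨rfl, h⟩)
        · exact Or.inl h
        · exact Or.inr ⟨rfl, h⟩

private lemma wlt_unstrip_iff {κ : ℕ} {x y : Option Tup} (hx : OKT x) (hy : OKT y) :
    wlt (unstrip κ x) (unstrip κ y) ↔ wlt x y := by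
  cases x with
  | none => simp
  | some ξ =>
    cases y with
    | none => simp [wlt]
    | some η => simpa using tlt_muh_iff (hx ξ rfl) (hy η rfl)

private lemma unstrip_inj {κ : ℕ} {x y : Option Tup} (hx : OKT x) (hy : OKT y)
    (h : unstrip κ x = unstrip κ y) : x = y := by
  rcases wlt_trichot x y with h' | h' | h'
  · rw [← wlt_unstrip_iff hx hy (κ := κ), h] at h'
    exact absurd h' (wlt_irrefl _)
  · exact h'
  · rw [← wlt_unstrip_iff hy hx (κ := κ), h] at h'
    exact absurd h' (wlt_irrefl _)

private lemma wle_unstrip_iff {κ : ℕ} {x y : Option Tup} (hx : OKT x) (hy : OKT y) :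
    wle (unstrip κ x) (unstrip κ y) ↔ wle x y := by
  constructor
  · rintro (h | h)
    · exact Or.inl (unstrip_inj hx hy h)
    · exact Or.inr ((wlt_unstrip_iff hx hy).1 h)
  · rintro (rfl | h)
    · exact wle_refl _
    · exact Or.inr ((wlt_unstrip_iff hx hy).2 h)

private lemma zcount_strip_some {κ : ℕ} {ξ η : Tup} (h : strip κ (some ξ) = some η)
    (hξ : ξ ≠ []) : η ≠ [] ∧ κ ≤ zcount ξ := by
  obtain ⟨h1, h2⟩ := unstrip_strip h
  refine ⟨?_, h2⟩
  intro hη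
  subst hη
  simp only [unstrip_some, List.modifyHead_nil, Option.some.injEq] at h1
  exact hξ h1.symm

private lemma strip_wlt {κ : ℕ} {x y : Option Tup} (hx : OKT x) (hy : OKT y) (h : wlt x y) :
    wle (strip κ x) (strip κ y) := by
  cases x with
  | none => simp at h
  | some ξ =>
    cases y with
    | none => exact wle_none_right _
    | some η =>
      rcases hsy : strip κ (some η) with _ | η'
      · exact wle_none_right _
      · obtain ⟨hy1, hy2⟩ := unstrip_strip hsy
        have hξη : tlt ξ η := h
        have hηz : zcount η ≤ zcount ξ := zcount_le_of_tlt (hx ξ rfl) hξη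
        have hκξ : κ ≤ zcount ξ := le_trans hy2 hηz
        rcases hsx : strip κ (some ξ) with _ | ξ'
        · simp only [strip, if_pos hκξ] at hsx; cases hsx
        · obtain ⟨hx1, _⟩ := unstrip_strip hsx
          refine Or.inr ?_
          have hξ' : OKT (some ξ') := by
            intro a ha; cases ha
            exact (zcount_strip_some hsx (hx ξ rfl)).1
          have hη' : OKT (some η') := by
            intro a ha; cases ha
            exact (zcount_strip_some hsy (hy η rfl)).1
          rw [← wlt_unstrip_iff hξ' hη' (κ := κ), hx1, hy1]
          exact h

private lemma strip_wle {κ : ℕ} {x y : Option Tup} (hx : OKT x) (hy : OKT y) (h : wle x y) :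
    wle (strip κ x) (strip κ y) := by
  rcases h with rfl | h
  · exact wle_refl _
  · exact strip_wlt hx hy h

private lemma strip_none_cases {κ : ℕ} {x : Option Tup} (h : strip κ x = none) :
    x = none ∨ ∃ ξ, x = some ξ ∧ zcount ξ < κ := by
  cases x with
  | none => exact Or.inl rfl
  | some ξ =>
    refine Or.inr ⟨ξ, rfl, ?_⟩
    by_contra hc
    simp only [strip, if_pos (not_lt.1 hc)] at h
    cases h

/-- key comparison: anything in the range of `unstrip` is below anything whose
zero-count is `< κ`. -/
private lemma unstrip_wlt_low {κ : ℕ} {ξ η : Tup} (hξ : ξ ≠ []) (hη : η ≠ [])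
    (h : zcount η < κ) : wlt (unstrip κ (some ξ)) (some η) := by
  refine tlt_of_zcount_lt hη ?_
  rw [zcount_muh hξ]
  omega

/-- reflection: if `x ≤ strip Y` with `x` a leaf, then `unstrip x ≤ Y`. -/
private lemma unstrip_reflect {κ : ℕ} {ξ : Tup} {Y : Option Tup} (hξ : ξ ≠ []) (hY : OKT Y)
    (h : wle (some ξ) (strip κ Y)) : wle (unstrip κ (some ξ)) Y := by
  cases Y with
  | none => exact wle_none_right _
  | some η =>
    rcases hs : strip κ (some η) with _ | η'
    · rcases strip_none_cases hs with h' | ⟨η'', he, hz⟩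
      · cases h'
      · cases he
        exact Or.inr (unstrip_wlt_low hξ (hY η rfl) hz)
    · rw [hs] at h
      obtain ⟨h1, _⟩ := unstrip_strip hs
      have hη' : OKT (some η') := by
        intro a ha; cases ha
        exact (zcount_strip_some hs (hY η rfl)).1
      have hξ' : OKT (some ξ) := by intro a ha; cases ha; exact hξ
      rw [← h1]
      exact (wle_unstrip_iff hξ' hη').2 h

/-! ### Dom lemmas -/

private lemma mem_Dom_none (i j : ℕ) : none ∈ Dom i j := Set.mem_insert _ _

private lemma mem_Dom_some_iff {i j : ℕ} {ξ : Tup} :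
    some ξ ∈ Dom i j ↔ ξ.length = j ∧ (ξ.map List.length).sum ≤ i := by
  constructor
  · rintro (h | ⟨η, hη, he⟩)
    · cases h
    · cases Option.some.inj he; exact hη
  · intro h
    exact Set.mem_insert_of_mem _ ⟨ξ, h, rfl⟩

private lemma OKT_of_mem {i j : ℕ} {x : Option Tup} (hj : 1 ≤ j) (hx : x ∈ Dom i j) :
    OKT x := by
  intro ξ hξ
  subst hξ
  obtain ⟨h1, _⟩ := mem_Dom_some_iff.1 hx
  intro he
  rw [he] at h1
  simp at h1
  omega

private lemma strip_mem_Dom {i₁ i₂ j : ℕ} (h12 : i₁ ≤ i₂) (hj : 1 ≤ j) {x : Option Tup}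
    (hx : x ∈ Dom i₂ j) : strip (i₂ - i₁) x ∈ Dom i₁ j := by
  cases x with
  | none => exact mem_Dom_none _ _
  | some ξ =>
    rcases hs : strip (i₂ - i₁) (some ξ) with _ | η
    · exact mem_Dom_none _ _
    · obtain ⟨h1, h2⟩ := mem_Dom_some_iff.1 hx
      obtain ⟨_, hκ⟩ := unstrip_strip hs
      cases ξ with
      | nil => simp at h1; omega
      | cons a s =>
        simp only [strip, if_pos hκ, List.modifyHead_cons, Option.some.injEq] at hs
        subst hs
        rw [mem_Dom_some_iff]
        constructor
        · simpa using h1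
        · have hlzc : (i₂ - i₁) ≤ a.length := le_trans hκ (lzc_le_length a)
          simp only [List.map_cons, List.sum_cons, List.length_drop] at h2 ⊢
          omega

private lemma unstrip_mem_Dom {i₁ i₂ j : ℕ} (h12 : i₁ ≤ i₂) {x : Option Tup}
    (hx : x ∈ Dom i₁ j) : unstrip (i₂ - i₁) x ∈ Dom i₂ j := by
  cases x with
  | none => exact mem_Dom_none _ _
  | some ξ =>
    obtain ⟨h1, h2⟩ := mem_Dom_some_iff.1 hx
    cases ξ with
    | nil =>
      simp only [unstrip_some, List.modifyHead_nil]
      exact mem_Dom_some_iff.2 ⟨h1, le_trans h2 h12⟩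
    | cons a s =>
      simp only [unstrip_some, List.modifyHead_cons]
      rw [mem_Dom_some_iff]
      constructor
      · simpa using h1
      · simp only [List.map_cons, List.sum_cons, List.length_append,
          List.length_replicate] at h2 ⊢
        omega

/-! ### trunc lemmas -/

@[simp] private lemma trunc_none (j p : ℕ) : trunc j p none = none := rfl
@[simp] private lemma trunc_some (j p : ℕ) (ξ : Tup) :
    trunc j p (some ξ) = some (ξ.take (j - p / 2)) := rfl

private lemma zcount_take {n : ℕ} (hn : 1 ≤ n) (ξ : Tup) : zcount (ξ.take n) = zcount ξ := by
  cases ξ with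
  | nil => simp
  | cons a s =>
    cases n with
    | zero => omega
    | succ n => rfl

private lemma take_modifyHead {n : ℕ} (hn : 1 ≤ n) (f : BStr → BStr) (ξ : Tup) :
    (ξ.modifyHead f).take n = (ξ.take n).modifyHead f := by
  cases ξ with
  | nil => simp
  | cons a s =>
    cases n with
    | zero => omega
    | succ n => simp

private lemma trunc_strip_comm {j p κ : ℕ} (hn : 1 ≤ j - p / 2) (x : Option Tup) :
    trunc j p (strip κ x) = strip κ (trunc j p x) := by
  cases x with
  | none => rfl
  | some ξ =>
    simp only [trunc_some]
    by_cases hκ : κ ≤ zcount ξ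
    · rw [strip, if_pos hκ]
      rw [strip, if_pos (by rw [zcount_take hn]; exact hκ)]
      simp only [trunc_some, Option.some.injEq]
      exact take_modifyHead hn _ _
    · rw [strip, if_neg hκ]
      rw [strip, if_neg (by rw [zcount_take hn]; exact hκ)]
      rfl

private lemma trunc_unstrip_comm {j p κ : ℕ} (hn : 1 ≤ j - p / 2) (x : Option Tup) :
    trunc j p (unstrip κ x) = unstrip κ (trunc j p x) := by
  cases x with
  | none => rfl
  | some ξ =>
    simp only [unstrip_some, trunc_some, Option.some.injEq]
    exact take_modifyHead hn _ _

private lemma trunc_wle {j p : ℕ} {x y : Option Tup} (h : wle x y) :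
    wle (trunc j p x) (trunc j p y) := by
  rcases h with rfl | h
  · exact wle_refl _
  · cases x with
    | none => simp at h
    | some ξ =>
      cases y with
      | none => exact wle_none_right _
      | some η =>
        rcases tlt_take (j - p / 2) h with h' | h'
        · exact Or.inl (by simp [h'])
        · exact Or.inr h'

private lemma OKT_trunc {j p : ℕ} (hn : 1 ≤ j - p / 2) {x : Option Tup} (hx : OKT x) :
    OKT (trunc j p x) := by
  cases x with
  | none => exact OKT_none
  | some ξ =>
    intro η hη he
    simp only [trunc_some, Option.some.injEq] at hη
    subst hη
    cases ξ with
    | nil => exact hx [] rfl rfl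
    | cons a s =>
      rcases Nat.exists_eq_add_of_le hn with ⟨m, hm⟩
      rw [hm] at he
      simp [List.take_cons] at he

/-! ### NV lemmas -/

private lemma NV_none_left (j p : ℕ) (y : Option Tup) : NV j p none y := by
  unfold NV
  split
  · exact wle_none_right _
  · cases y with
    | none => exact Or.inr ⟨rfl, rfl⟩
    | some η => exact Or.inl (by simp [wlt])

private lemma NV_mono {j p : ℕ} {x x' y : Option Tup} (hxx : wle x x') (h : NV j p x y) :
    NV j p x' y := by
  unfold NV at h ⊢
  split at h <;> rename_i hpar
  · rw [if_pos hpar]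
    exact wle_trans h (trunc_wle hxx)
  · rw [if_neg hpar]
    rcases h with h | ⟨h1, h2⟩
    · exact Or.inl (wlt_wle_trans h (trunc_wle hxx))
    · subst h1
      exact Or.inr ⟨wle_none_left hxx, h2⟩

private lemma NotLoose_iff {D : Set (Option Tup)} {j p : ℕ} {x y : Option Tup} :
    NotLoose D j p x y ↔ ∀ x' ∈ D, wlt x' x → ¬ NV j p x' y := by
  constructor
  · rintro (h | h)
    · intro x' _ hlt hnv
      exact h (NV_mono (wle_of_wlt hlt) hnv)
    · exact h
  · exact Or.inr

/-! ### the key transfer lemma -/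

private lemma adj_le {κ : ℕ} {α : Tup} (hα : α ≠ []) {b : Option Tup} (hb : OKT b) :
    wle (strip κ b) (some α) ↔ wle b (unstrip κ (some α)) := by
  have hsα : OKT (some α) := by intro a ha; cases ha; exact hα
  cases b with
  | none =>
    simp only [show strip κ none = none from rfl]
    constructor
    · rintro (h | h)
      · cases h
      · simp at h
    · rintro (h | h)
      · cases h
      · simp at h
  | some β =>
    rcases hs : strip κ (some β) with _ | β'
    · rcases strip_none_cases hs with h' | ⟨β'', he, hz⟩
      · cases h'
      · cases he
        have hlow : wlt (unstrip κ (some α)) (some β) :=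
          unstrip_wlt_low hα (hb β rfl) hz
        constructor
        · rintro (h | h)
          · cases h
          · simp at h
        · rintro (h | h)
          · rw [← h] at hlow
            exact absurd hlow (wlt_irrefl _)
          · exact absurd h (wlt_asymm hlow)
    · obtain ⟨h1, _⟩ := unstrip_strip hs
      have hβ' : OKT (some β') := by
        intro a ha; cases ha; exact (zcount_strip_some hs (hb β rfl)).1
      rw [← h1]
      exact (wle_unstrip_iff hβ' hsα).symm

private lemma adj_lt {κ : ℕ} {α : Tup} (hα : α ≠ []) {b : Option Tup} (hb : OKT b) :
    wlt (strip κ b) (some α) ↔ wlt b (unstrip κ (some α)) := by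
  have hsα : OKT (some α) := by intro a ha; cases ha; exact hα
  cases b with
  | none => simp [show strip κ none = none from rfl]
  | some β =>
    rcases hs : strip κ (some β) with _ | β'
    · rcases strip_none_cases hs with h' | ⟨β'', he, hz⟩
      · cases h'
      · cases he
        have hlow : wlt (unstrip κ (some α)) (some β) :=
          unstrip_wlt_low hα (hb β rfl) hz
        constructor
        · intro h; simp at h
        · intro h
          exact absurd h (wlt_asymm hlow)
    · obtain ⟨h1, _⟩ := unstrip_strip hs
      have hβ' : OKT (some β') := by
        intro a ha; cases ha; exact (zcount_strip_some hs (hb β rfl)).1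
      rw [← h1]
      exact (wlt_unstrip_iff hβ' hsα).symm

private lemma NV_transfer {κ j p : ℕ} (hn : 1 ≤ j - p / 2) {x Y : Option Tup}
    (hx : OKT x) (hY : OKT Y) :
    NV j p x (strip κ Y) ↔ NV j p (unstrip κ x) Y := by
  cases x with
  | none =>
    rw [unstrip_none]
    exact iff_of_true (NV_none_left _ _ _) (NV_none_left _ _ _)
  | some ξ =>
    have hξ : ξ ≠ [] := hx ξ rfl
    have htξ : (ξ.take (j - p / 2)) ≠ [] := by
      intro he
      exact OKT_trunc hn hx _ (by simp) he
    unfold NV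
    rw [trunc_strip_comm hn, trunc_unstrip_comm hn]
    split
    · simpa only [trunc_some] using adj_le htξ (OKT_trunc hn hY)
    · simp only [trunc_some]
      rw [adj_lt htξ (OKT_trunc hn hY)]
      constructor
      · rintro (h | ⟨h1, h2⟩)
        · exact Or.inl h
        · cases h1
      · rintro (h | ⟨h1, h2⟩)
        · exact Or.inl h
        · simp at h1

/-! ### finiteness and least elements -/

private lemma LeafSet_finite (i j : ℕ) : (LeafSet i j).Finite := by
  induction j with
  | zero =>
    apply Set.Finite.subset (Set.finite_singleton ([] : Tup))
    rintro ξ ⟨h1, _⟩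
    simp only [Set.mem_singleton_iff]
    exact List.length_eq_zero_iff.1 h1
  | succ n ih =>
    have hfin : {s : BStr | s.length ≤ i}.Finite := List.finite_length_le Bool i
    apply Set.Finite.subset (hfin.biUnion (fun s _ => ih.image (s :: ·)))
    rintro ξ ⟨h1, h2⟩
    cases ξ with
    | nil => simp at h1
    | cons a t =>
      simp only [List.map_cons, List.sum_cons] at h2
      refine Set.mem_biUnion (show a ∈ {s : BStr | s.length ≤ i} by
        simp only [Set.mem_setOf_eq]; omega) ?_
      refine ⟨t, ⟨?_, by omega⟩, rfl⟩
      simpa using h1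

private lemma Dom_finite (i j : ℕ) : (Dom i j).Finite :=
  ((LeafSet_finite i j).image some).insert none

private lemma exists_wle_min {S : Set (Option Tup)} (hfin : S.Finite) (hne : S.Nonempty) :
    ∃ m ∈ S, ∀ x ∈ S, wle m x := by
  refine Set.Finite.induction_on (motive := fun S _ => S.Nonempty → ∃ m ∈ S, ∀ x ∈ S, wle m x) S hfin (fun hne => absurd hne (by simp)) ?_ hne
  intro a s _ _ ih _
  rcases s.eq_empty_or_nonempty with rfl | hs
  · exact ⟨a, Set.mem_insert _ _, by
      rintro x (rfl | hx)
      · exact wle_refl _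
      · cases hx⟩
  · obtain ⟨m, hm, hmin⟩ := ih hs
    rcases wlt_trichot a m with h | rfl | h
    · refine ⟨a, Set.mem_insert _ _, ?_⟩
      rintro x (rfl | hx)
      · exact wle_refl _
      · exact wle_trans (wle_of_wlt h) (hmin x hx)
    · exact ⟨a, Set.mem_insert _ _, by
        rintro x (rfl | hx)
        · exact wle_refl _
        · exact hmin x hx⟩
    · refine ⟨m, Set.mem_insert_of_mem _ hm, ?_⟩
      rintro x (rfl | hx)
      · exact wle_of_wlt h
      · exact hmin x hx


/-- Fix `i₁ ≤ i₂` and a height `j`, and let `ν₁, ν₂` be node labelings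
into `L(T_{i₁,j}) ∪ {⊤}` resp. `L(T_{i₂,j}) ∪ {⊤}` with `ν₁(u) = ν₂(u)^{i₂-i₁}` for all
`u`.  Then for any arc `vw` with `π(v) < 2j`,
`drop(ν₁, vw) = drop(ν₂, vw)^{i₂-i₁}`. -/
theorem stmt_16 {V : Type*} (i₁ i₂ j : ℕ) (h12 : i₁ ≤ i₂)
    (π : V → ℕ)
    (ν₁ ν₂ : V → Option Tup)
    (hlab₁ : ∀ u, ν₁ u ∈ Dom i₁ j) (hlab₂ : ∀ u, ν₂ u ∈ Dom i₂ j)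
    (hrel : ∀ u, ν₁ u = strip (i₂ - i₁) (ν₂ u))
    (v w : V) (hp : π v < 2 * j)
    (d₁ d₂ : Option Tup)
    (h₁ : IsDrop i₁ j (π v) (ν₁ v) (ν₁ w) d₁)
    (h₂ : IsDrop i₂ j (π v) (ν₂ v) (ν₂ w) d₂) :
    d₁ = strip (i₂ - i₁) d₂ := by
  set κ := i₂ - i₁ with hκdef
  have hj : 1 ≤ j := by omega
  have hn : 1 ≤ j - π v / 2 := by omega
  obtain ⟨hd₁D, hd₁le, hd₁nl, hd₁max⟩ := h₁
  obtain ⟨hd₂D, hd₂le, hd₂nl, hd₂max⟩ := h₂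
  have hNL₁ := NotLoose_iff.1 hd₁nl
  have hNL₂ := NotLoose_iff.1 hd₂nl
  have hNVt : ∀ {x : Option Tup}, OKT x →
      (NV j (π v) x (ν₁ w) ↔ NV j (π v) (unstrip κ x) (ν₂ w)) := by
    intro x hx
    rw [hrel w]
    exact NV_transfer hn hx (OKT_of_mem hj (hlab₂ w))
  -- Direction 1 : strip κ d₂ ≤ d₁
  have hσD : strip κ d₂ ∈ Dom i₁ j := strip_mem_Dom h12 hj hd₂D
  have hσle : wle (strip κ d₂) (ν₁ v) := by
    rw [hrel v]
    exact strip_wle (OKT_of_mem hj hd₂D) (OKT_of_mem hj (hlab₂ v)) hd₂le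
  have hσNL : NotLoose (Dom i₁ j) j (π v) (strip κ d₂) (ν₁ w) := by
    rw [NotLoose_iff]
    intro x₁ hx₁ hlt hNV
    cases x₁ with
    | none => exact wlt_none_left _ hlt
    | some ξ₁ =>
      have hξ₁ : ξ₁ ≠ [] := OKT_of_mem hj hx₁ ξ₁ rfl
      have hu : wlt (unstrip κ (some ξ₁)) d₂ := by
        rcases hs : strip κ d₂ with _ | η
        · rcases strip_none_cases hs with rfl | ⟨η', hη', hz⟩
          · exact wlt_some_none _
          · rw [hη']
            exact unstrip_wlt_low hξ₁ (OKT_of_mem hj hd₂D η' (by rw [hη'])) hz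
        · cases hd₂ : d₂ with
          | none => rw [hd₂] at hs; cases hs
          | some δ =>
            rw [hd₂] at hs
            obtain ⟨h1, _⟩ := unstrip_strip hs
            rw [hd₂, hs] at hlt
            have hη : OKT (some η) := by
              intro a ha; cases ha
              exact (zcount_strip_some hs (OKT_of_mem hj hd₂D δ (by rw [hd₂]))).1
            have hsξ₁ : OKT (some ξ₁) := by intro a ha; cases ha; exact hξ₁
            rw [← h1]
            exact (wlt_unstrip_iff hsξ₁ hη).2 hlt
      exact hNL₂ _ (unstrip_mem_Dom h12 hx₁) hu ((hNVt (OKT_of_mem hj hx₁)).1 hNV)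
  have dir1 : wle (strip κ d₂) d₁ := hd₁max _ hσD hσle hσNL
  -- Direction 2 : d₁ ≤ strip κ d₂
  have dir2 : wle d₁ (strip κ d₂) := by
    cases hd₁ : d₁ with
    | some ξ =>
      rw [hd₁] at hd₁D hd₁le hNL₁
      have hξ : ξ ≠ [] := OKT_of_mem hj hd₁D ξ rfl
      have hXD : unstrip κ (some ξ) ∈ Dom i₂ j := unstrip_mem_Dom h12 hd₁D
      have hXle : wle (unstrip κ (some ξ)) (ν₂ v) :=
        unstrip_reflect hξ (OKT_of_mem hj (hlab₂ v)) (by rw [← hrel v]; exact hd₁le)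
      have hXNL : NotLoose (Dom i₂ j) j (π v) (unstrip κ (some ξ)) (ν₂ w) := by
        rw [NotLoose_iff]
        intro X' hX' hlt hNV
        cases X' with
        | none => exact wlt_none_left _ hlt
        | some β =>
          have hβ : β ≠ [] := OKT_of_mem hj hX' β rfl
          have hOKβ : OKT (some β) := by intro a ha; cases ha; exact hβ
          have hκβ : κ ≤ zcount β := by
            have h' := zcount_le_of_tlt hβ (hlt : tlt β _)
            rw [zcount_muh hξ] at h'
            omega
          have hsβ : strip κ (some β) = some (β.modifyHead (List.drop κ)) := by
            rw [strip, if_pos hκβ]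
          obtain ⟨hb1, _⟩ := unstrip_strip hsβ
          have hσlt : wlt (strip κ (some β)) (some ξ) := (adj_lt hξ hOKβ).2 hlt
          have hσβD : strip κ (some β) ∈ Dom i₁ j := strip_mem_Dom h12 hj hX'
          refine hNL₁ _ hσβD hσlt ((hNVt (OKT_of_mem hj hσβD)).2 ?_)
          rw [hsβ, hb1]
          exact hNV
      have hud : wle (unstrip κ (some ξ)) d₂ := hd₂max _ hXD hXle hXNL
      have := strip_wle (κ := κ) (OKT_of_mem hj hXD) (OKT_of_mem hj hd₂D) hud
      rwa [strip_unstrip (by intro a ha; cases ha; exact hξ)] at this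
    | none =>
      rw [hd₁] at hd₁le hNL₁
      have hν₁v : ν₁ v = none := wle_none_left hd₁le
      rcases hsd : strip κ d₂ with _ | ξ
      · exact wle_refl _
      · exfalso
        have hξD : some ξ ∈ Dom i₁ j := hsd ▸ strip_mem_Dom h12 hj hd₂D
        have hξ : ξ ≠ [] := OKT_of_mem hj hξD ξ rfl
        cases hd₂' : d₂ with
        | none => rw [hd₂'] at hsd; cases hsd
        | some δ =>
          rw [hd₂'] at hsd hd₂le hd₂max hNL₂
          obtain ⟨hb1, hκδ⟩ := unstrip_strip hsd
          have hnv₁ξ : ¬ NV j (π v) (some ξ) (ν₁ w) :=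
            hNL₁ _ hξD (wlt_some_none ξ)
          have hnv₂ : ¬ NV j (π v) (some δ) (ν₂ w) := by
            intro h
            exact hnv₁ξ ((hNVt (OKT_of_mem hj hξD)).2 (by rw [hb1]; exact h))
          set S : Set (Option Tup) :=
            {X | X ∈ Dom i₂ j ∧ NV j (π v) X (ν₂ w) ∧ wle X (ν₂ v)} with hSdef
          rcases S.eq_empty_or_nonempty with hS | hS
          · have hNLν : NotLoose (Dom i₂ j) j (π v) (ν₂ v) (ν₂ w) := by
              rw [NotLoose_iff]
              intro X' hX' hlt hNV
              have : X' ∈ S := ⟨hX', hNV, wle_of_wlt hlt⟩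
              rw [hS] at this
              exact this
            have h' := hd₂max _ (hlab₂ v) (wle_refl _) hNLν
            have hde : some δ = ν₂ v := wle_antisymm hd₂le h'
            rw [hrel v, ← hde, hsd] at hν₁v
            cases hν₁v
          · obtain ⟨m, hmS, hmin⟩ := exists_wle_min
              ((Dom_finite i₂ j).subset (fun X hX => hX.1)) hS
            have hmNL : NotLoose (Dom i₂ j) j (π v) m (ν₂ w) := by
              rw [NotLoose_iff]
              intro X' hX' hlt hNV
              have hX'S : X' ∈ S :=
                ⟨hX', hNV, wle_of_wlt (wlt_wle_trans hlt hmS.2.2)⟩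
              exact wlt_irrefl _ (wlt_wle_trans hlt (hmin X' hX'S))
            have h' := hd₂max m hmS.1 hmS.2.2 hmNL
            exact hnv₂ (NV_mono h' hmS.2.1)
  exact wle_antisymm dir2 dir1
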